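/- Weak idempotence of the GBF operator: if ψ: ℝ^p → ℝ is directionally differentiable and α = (1−θ)γ + θβ with θ ≤ 0 or θ ≥ 1, then Δ_{Δ_ψ(·,α)}(β,γ) = Δ_ψ(β,γ). In particular Δ_{Δ_ψ(·,β)}(β,γ) = Δ_{Δ_ψ(·,γ)}(β,γ) = Δ_ψ(β,γ). -/

import Mathlib

open Filter Topology Set

noncomputable section

def HasDirDeriv {E : Type*} [AddCommGroup E] [Module ℝ E] (ψ : E → ℝ) (β h : E) (d : ℝ) : Prop :=
  Tendsto (fun ε : ℝ => (ψ (β + ε • h) - ψ β) / ε) (𝓝[>] (0:ℝ)) (𝓝 d)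

def GBF {E : Type*} [AddCommGroup E] [Module ℝ E] (ψ : E → ℝ) (δ : E → E → ℝ) (β γ : E) : ℝ :=
  ψ β - ψ γ - δ γ (β - γ)

lemma hasDirDeriv_unique {E : Type*} [AddCommGroup E] [Module ℝ E] {ψ : E → ℝ} {β h : E}
    {d₁ d₂ : ℝ} (h₁ : HasDirDeriv ψ β h d₁) (h₂ : HasDirDeriv ψ β h d₂) : d₁ = d₂ :=
  tendsto_nhds_unique h₁ h₂

lemma hasDirDeriv_zero {E : Type*} [AddCommGroup E] [Module ℝ E] (ψ : E → ℝ) (β : E) :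
    HasDirDeriv ψ β 0 0 := by
  have : (fun ε : ℝ => (ψ (β + ε • (0:E)) - ψ β) / ε) = fun _ => 0 := by
    funext ε; simp
  rw [HasDirDeriv, this]
  exact tendsto_const_nhds

lemma hasDirDeriv_smul {E : Type*} [AddCommGroup E] [Module ℝ E] {ψ : E → ℝ} {β h : E}
    {d : ℝ} (hd : HasDirDeriv ψ β h d) {a : ℝ} (ha : 0 < a) :
    HasDirDeriv ψ β (a • h) (a * d) := by
  have hmap : Tendsto (fun ε : ℝ => ε * a) (𝓝[>] (0:ℝ)) (𝓝[>] (0:ℝ)) := by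
    rw [tendsto_nhdsWithin_iff]
    constructor
    · have : Tendsto (fun ε : ℝ => ε * a) (𝓝 0) (𝓝 (0 * a)) :=
        (tendsto_id.mul_const a)
      simpa using this.mono_left nhdsWithin_le_nhds
    · filter_upwards [self_mem_nhdsWithin] with ε hε
      exact mul_pos hε ha
  have h1 : Tendsto (fun ε : ℝ => (ψ (β + (ε * a) • h) - ψ β) / (ε * a)) (𝓝[>] (0:ℝ)) (𝓝 d) :=
    hd.comp hmap
  have h2 : Tendsto (fun ε : ℝ => a * ((ψ (β + (ε * a) • h) - ψ β) / (ε * a)))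
      (𝓝[>] (0:ℝ)) (𝓝 (a * d)) := h1.const_mul a
  refine h2.congr' ?_
  filter_upwards [self_mem_nhdsWithin] with ε hε
  have hεa : ε * a ≠ 0 := ne_of_gt (mul_pos hε ha)
  have hε' : ε ≠ 0 := ne_of_gt hε
  have ha' : a ≠ 0 := ne_of_gt ha
  rw [mul_smul]
  field_simp

/-- Weak idempotence of the GBF operator. -/
theorem gbf_weak_idempotence {p : ℕ} (ψ : (Fin p → ℝ) → ℝ)
    (δψ : (Fin p → ℝ) → (Fin p → ℝ) → ℝ)
    (hψ : ∀ β h, HasDirDeriv ψ β h (δψ β h))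
    (β γ α : Fin p → ℝ) (θ : ℝ) (hθ : θ ≤ 0 ∨ 1 ≤ θ)
    (hα : α = (1 - θ) • γ + θ • β) :
    ∃ d : ℝ,
      HasDirDeriv (fun x => GBF ψ δψ x α) γ (β - γ) d ∧
      GBF ψ δψ β α - GBF ψ δψ γ α - d = GBF ψ δψ β γ := by
  set h : Fin p → ℝ := β - γ with hh
  -- homogeneity of δψ at α
  have hom : ∀ (h' : Fin p → ℝ) (a : ℝ), 0 ≤ a → δψ α (a • h') = a * δψ α h' := by
    intro h' a ha
    rcases eq_or_lt_of_le ha with rfl | ha'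
    · rw [zero_smul, zero_mul]
      exact hasDirDeriv_unique (by rw [← zero_smul ℝ h']; exact hψ α _) (hasDirDeriv_zero ψ α)
    · exact hasDirDeriv_unique (hψ α (a • h')) (hasDirDeriv_smul (hψ α h') ha')
  have hγα : γ - α = (-θ) • h := by
    rw [hα, hh]; funext i
    simp [sub_smul, smul_sub]
    ring
  have hβα : β - α = (1 - θ) • h := by
    rw [hα, hh]; funext i
    simp [sub_smul, smul_sub]
    ring
  have hεα : ∀ ε : ℝ, γ + ε • h - α = (ε - θ) • h := by
    intro ε
    have : γ + ε • h - α = (γ - α) + ε • h := by abel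
    rw [this, hγα, ← add_smul]
    ring_nf
  -- the constant c and its two key properties
  obtain ⟨c, hc1, hc2⟩ : ∃ c : ℝ,
      (∀ᶠ ε in 𝓝[>] (0:ℝ), δψ α ((ε - θ) • h) - δψ α ((-θ) • h) = ε * c) ∧
      δψ α ((1 - θ) • h) - δψ α ((-θ) • h) = c := by
    rcases hθ with hθ | hθ
    · refine ⟨δψ α h, ?_, ?_⟩
      · filter_upwards [self_mem_nhdsWithin] with ε hε
        rw [hom h (ε - θ) (by linarith [(Set.mem_Ioi.mp hε).le]), hom h (-θ) (by linarith)]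
        ring
      · rw [hom h (1 - θ) (by linarith), hom h (-θ) (by linarith)]
        ring
    · refine ⟨-δψ α (-h), ?_, ?_⟩
      · filter_upwards [Ioo_mem_nhdsGT_of_mem (Set.left_mem_Ico.2 one_pos)] with ε hε
        have h1 : (ε - θ) • h = (θ - ε) • (-h) := by
          rw [smul_neg, ← neg_smul]; ring_nf
        have h2 : (-θ) • h = θ • (-h) := by
          rw [smul_neg, ← neg_smul]
        rw [h1, h2, hom (-h) (θ - ε) (by linarith [hε.2]), hom (-h) θ (by linarith)]
        ring
      · have h1 : (1 - θ) • h = (θ - 1) • (-h) := by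
          rw [smul_neg, ← neg_smul]; ring_nf
        have h2 : (-θ) • h = θ • (-h) := by
          rw [smul_neg, ← neg_smul]
        rw [h1, h2, hom (-h) (θ - 1) (by linarith), hom (-h) θ (by linarith)]
        ring
  refine ⟨δψ γ h - c, ?_, ?_⟩
  · -- directional derivative of x ↦ GBF ψ δψ x α
    have key : Tendsto (fun ε : ℝ => (ψ (γ + ε • h) - ψ γ) / ε - c) (𝓝[>] (0:ℝ))
        (𝓝 (δψ γ h - c)) := (hψ γ h).sub_const c
    refine key.congr' ?_
    filter_upwards [hc1, self_mem_nhdsWithin] with ε hεc hε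
    simp only [GBF]
    rw [hεα ε, hγα] at *
    have : ψ (γ + ε • h) - ψ α - δψ α ((ε - θ) • h) - (ψ γ - ψ α - δψ α ((-θ) • h))
        = (ψ (γ + ε • h) - ψ γ) - ε * c := by
      rw [← hεc]; ring
    rw [this, sub_div, sub_div, mul_div_cancel_left₀ c (ne_of_gt hε)]
    ring
  · show ψ β - ψ α - δψ α (β - α) - (ψ γ - ψ α - δψ α (γ - α)) - (δψ γ h - c)
        = ψ β - ψ γ - δψ γ (β - γ)
    rw [hβα, hγα, ← hh]
    linarith [hc2]
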